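/- The infimum over a ∈ (0,1] of h₁(a) = (1 - (2·arccos(a) + arccos(2a-1))/(2π))/a lies in the closed interval [0.803125, 0.803325]. -/

import Mathlib

open Real Set

/-- `h₁(a) = (1 - (2·arccos a + arccos(2a-1))/(2π))/a`. -/
noncomputable def h₁ (a : ℝ) : ℝ :=
  (1 - (2 * Real.arccos a + Real.arccos (2 * a - 1)) / (2 * Real.pi)) / a


private lemma mono_from_deriv (f g : ℝ → ℝ) (hder : ∀ x, HasDerivAt f (g x) x)
    (hg : ∀ x, 0 ≤ x → 0 ≤ g x) {t : ℝ} (ht : 0 ≤ t) : f 0 ≤ f t := by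
  have hmono : MonotoneOn f (Set.Ici 0) := by
    apply monotoneOn_of_deriv_nonneg (convex_Ici 0)
    · exact fun x _ => (hder x).continuousAt.continuousWithinAt
    · exact fun x _ => (hder x).differentiableAt.differentiableWithinAt
    · intro x hx
      rw [interior_Ici] at hx
      rw [(hder x).deriv]
      exact hg x hx.le
  exact hmono Set.self_mem_Ici ht ht

private lemma poly_deriv (c3 c5 c7 c9 : ℝ) (x : ℝ) :
    HasDerivAt (fun x : ℝ => c3*x^3 + c5*x^5 + c7*x^7 + c9*x^9)
      (3*c3*x^2 + 5*c5*x^4 + 7*c7*x^6 + 9*c9*x^8) x := by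
  have h := ((((hasDerivAt_pow 3 x).const_mul c3).add ((hasDerivAt_pow 5 x).const_mul c5)).add
      ((hasDerivAt_pow 7 x).const_mul c7)).add ((hasDerivAt_pow 9 x).const_mul c9)
  refine h.congr_deriv ?_
  push_cast; ring

private lemma poly_deriv_even (c2 c4 c6 c8 c10 : ℝ) (x : ℝ) :
    HasDerivAt (fun x : ℝ => c2*x^2 + c4*x^4 + c6*x^6 + c8*x^8 + c10*x^10)
      (2*c2*x^1 + 4*c4*x^3 + 6*c6*x^5 + 8*c8*x^7 + 10*c10*x^9) x := by
  have h := (((((hasDerivAt_pow 2 x).const_mul c2).add ((hasDerivAt_pow 4 x).const_mul c4)).add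
      ((hasDerivAt_pow 6 x).const_mul c6)).add ((hasDerivAt_pow 8 x).const_mul c8)).add
      ((hasDerivAt_pow 10 x).const_mul c10)
  refine h.congr_deriv ?_
  push_cast; ring

private lemma sin_taylor_3 {t : ℝ} (ht : 0 ≤ t) : t - t^3/6 ≤ Real.sin t := by
  have h := mono_from_deriv (fun x => Real.sin x - (x + ((-1/6)*x^3 + 0*x^5 + 0*x^7 + 0*x^9)))
      (fun x => Real.cos x - (1 - x^2/2)) (fun x => by
        have h2 := (hasDerivAt_id' x).add (poly_deriv (-1/6) 0 0 0 x)
        refine ((Real.hasDerivAt_sin x).sub h2).congr_deriv ?_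
        ring)
      (fun x _ => by linarith [Real.one_sub_sq_div_two_le_cos (x := x)]) ht
  simp only [Real.sin_zero] at h
  norm_num at h
  linarith

private lemma cos_taylor_4 {t : ℝ} (ht : 0 ≤ t) : Real.cos t ≤ 1 - t^2/2 + t^4/24 := by
  have h := mono_from_deriv
      (fun x => ((-1/2)*x^2 + (1/24)*x^4 + 0*x^6 + 0*x^8 + 0*x^10) - Real.cos x)
      (fun x => Real.sin x - (x - x^3/6)) (fun x => by
        have h2 := (poly_deriv_even (-1/2) (1/24) 0 0 0 x).sub (Real.hasDerivAt_cos x)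
        refine h2.congr_deriv ?_
        ring)
      (fun x hx => by linarith [sin_taylor_3 hx]) ht
  simp only [Real.cos_zero] at h
  norm_num at h
  linarith

private lemma sin_taylor_5 {t : ℝ} (ht : 0 ≤ t) : Real.sin t ≤ t - t^3/6 + t^5/120 := by
  have h := mono_from_deriv
      (fun x => (x + ((-1/6)*x^3 + (1/120)*x^5 + 0*x^7 + 0*x^9)) - Real.sin x)
      (fun x => (1 - x^2/2 + x^4/24) - Real.cos x) (fun x => by
        have h2 := ((hasDerivAt_id' x).add (poly_deriv (-1/6) (1/120) 0 0 x)).sub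
          (Real.hasDerivAt_sin x)
        refine h2.congr_deriv ?_
        ring)
      (fun x hx => by linarith [cos_taylor_4 hx]) ht
  simp only [Real.sin_zero] at h
  norm_num at h
  linarith

private lemma cos_taylor_6 {t : ℝ} (ht : 0 ≤ t) :
    1 - t^2/2 + t^4/24 - t^6/720 ≤ Real.cos t := by
  have h := mono_from_deriv
      (fun x => Real.cos x - ((-1/2)*x^2 + (1/24)*x^4 + (-1/720)*x^6 + 0*x^8 + 0*x^10))
      (fun x => (x - x^3/6 + x^5/120) - Real.sin x) (fun x => by
        have h2 := (Real.hasDerivAt_cos x).sub (poly_deriv_even (-1/2) (1/24) (-1/720) 0 0 x)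
        refine h2.congr_deriv ?_
        ring)
      (fun x hx => by linarith [sin_taylor_5 hx]) ht
  simp only [Real.cos_zero] at h
  norm_num at h
  linarith

private lemma sin_taylor_7 {t : ℝ} (ht : 0 ≤ t) :
    t - t^3/6 + t^5/120 - t^7/5040 ≤ Real.sin t := by
  have h := mono_from_deriv
      (fun x => Real.sin x - (x + ((-1/6)*x^3 + (1/120)*x^5 + (-1/5040)*x^7 + 0*x^9)))
      (fun x => Real.cos x - (1 - x^2/2 + x^4/24 - x^6/720)) (fun x => by
        have h2 := (Real.hasDerivAt_sin x).sub
          ((hasDerivAt_id' x).add (poly_deriv (-1/6) (1/120) (-1/5040) 0 x))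
        refine h2.congr_deriv ?_
        ring)
      (fun x hx => by linarith [cos_taylor_6 hx]) ht
  simp only [Real.sin_zero] at h
  norm_num at h
  linarith

private lemma cos_taylor_8 {t : ℝ} (ht : 0 ≤ t) :
    Real.cos t ≤ 1 - t^2/2 + t^4/24 - t^6/720 + t^8/40320 := by
  have h := mono_from_deriv
      (fun x => ((-1/2)*x^2 + (1/24)*x^4 + (-1/720)*x^6 + (1/40320)*x^8 + 0*x^10) - Real.cos x)
      (fun x => Real.sin x - (x - x^3/6 + x^5/120 - x^7/5040)) (fun x => by
        have h2 := (poly_deriv_even (-1/2) (1/24) (-1/720) (1/40320) 0 x).sub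
          (Real.hasDerivAt_cos x)
        refine h2.congr_deriv ?_
        ring)
      (fun x hx => by linarith [sin_taylor_7 hx]) ht
  simp only [Real.cos_zero] at h
  norm_num at h
  linarith

private lemma sin_taylor_9 {t : ℝ} (ht : 0 ≤ t) :
    Real.sin t ≤ t - t^3/6 + t^5/120 - t^7/5040 + t^9/362880 := by
  have h := mono_from_deriv
      (fun x => (x + ((-1/6)*x^3 + (1/120)*x^5 + (-1/5040)*x^7 + (1/362880)*x^9)) - Real.sin x)
      (fun x => (1 - x^2/2 + x^4/24 - x^6/720 + x^8/40320) - Real.cos x) (fun x => by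
        have h2 := ((hasDerivAt_id' x).add
          (poly_deriv (-1/6) (1/120) (-1/5040) (1/362880) x)).sub (Real.hasDerivAt_sin x)
        refine h2.congr_deriv ?_
        ring)
      (fun x hx => by linarith [cos_taylor_8 hx]) ht
  simp only [Real.sin_zero] at h
  norm_num at h
  linarith

private lemma cos_taylor_10 {t : ℝ} (ht : 0 ≤ t) :
    1 - t^2/2 + t^4/24 - t^6/720 + t^8/40320 - t^10/3628800 ≤ Real.cos t := by
  have h := mono_from_deriv
      (fun x => Real.cos x -
        ((-1/2)*x^2 + (1/24)*x^4 + (-1/720)*x^6 + (1/40320)*x^8 + (-1/3628800)*x^10))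
      (fun x => (x - x^3/6 + x^5/120 - x^7/5040 + x^9/362880) - Real.sin x) (fun x => by
        have h2 := (Real.hasDerivAt_cos x).sub
          (poly_deriv_even (-1/2) (1/24) (-1/720) (1/40320) (-1/3628800) x)
        refine h2.congr_deriv ?_
        ring)
      (fun x hx => by linarith [sin_taylor_9 hx]) ht
  simp only [Real.cos_zero] at h
  norm_num at h
  linarith

private lemma cos_le_num {u x : ℝ} (hu : 0 ≤ u)
    (h : 1 - u^2/2 + u^4/24 - u^6/720 + u^8/40320 ≤ x) : Real.cos u ≤ x :=
  le_trans (cos_taylor_8 hu) h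

private lemma le_cos_num {s x : ℝ} (hs : 0 ≤ s)
    (h : x ≤ 1 - s^2/2 + s^4/24 - s^6/720 + s^8/40320 - s^10/3628800) : x ≤ Real.cos s :=
  le_trans h (cos_taylor_10 hs)


private lemma arccos_le_of_cos_le {x u : ℝ} (hu0 : 0 ≤ u) (huπ : u ≤ π)
    (h : Real.cos u ≤ x) : Real.arccos x ≤ u := by
  have h1 : Real.arccos x ≤ Real.arccos (Real.cos u) := by
    simp only [Real.arccos]
    have := Real.monotone_arcsin h
    linarith
  rwa [Real.arccos_cos hu0 huπ] at h1

private lemma le_arccos_of_le_cos {x s : ℝ} (hs0 : 0 ≤ s) (hsπ : s ≤ π)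
    (h : x ≤ Real.cos s) : s ≤ Real.arccos x := by
  have h1 : Real.arccos (Real.cos s) ≤ Real.arccos x := by
    simp only [Real.arccos]
    have := Real.monotone_arcsin h
    linarith
  rwa [Real.arccos_cos hs0 hsπ] at h1

private lemma key (l r m : ℝ) (hl0 : 0 ≤ l) (hr1 : r ≤ 1)
    (hq : ∀ x, l < x → x < r →
      2*π*m ≤ 2/Real.sqrt (1-x^2) + 2/Real.sqrt (1-(2*x-1)^2)) :
    ∀ a, l ≤ a → a ≤ r →
      2*Real.arccos a + Real.arccos (2*a-1) + 2*π*m*a ≤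
      2*Real.arccos l + Real.arccos (2*l-1) + 2*π*m*l := by
  intro a ha1 ha2
  have hanti : AntitoneOn (fun x : ℝ => 2*Real.arccos x + Real.arccos (2*x-1) + 2*π*m*x)
      (Set.Icc l r) := by
    apply antitoneOn_of_deriv_nonpos (convex_Icc l r)
    · apply Continuous.continuousOn
      exact ((continuous_const.mul Real.continuous_arccos).add
        (Real.continuous_arccos.comp (by continuity))).add (continuous_const.mul continuous_id)
    · intro x hx
      rw [interior_Icc] at hx
      have hx0 : 0 < x := lt_of_le_of_lt hl0 hx.1
      have hx1 : x < 1 := lt_of_lt_of_le hx.2 hr1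
      have h1 : HasDerivAt Real.arccos (-(1/Real.sqrt (1-x^2))) x :=
        Real.hasDerivAt_arccos (by linarith) (by linarith)
      have h2 : HasDerivAt (fun x : ℝ => Real.arccos (2*x-1))
          (-(1/Real.sqrt (1-(2*x-1)^2)) * 2) x := by
        have hin : HasDerivAt (fun x : ℝ => 2*x-1) 2 x := by
          simpa using ((hasDerivAt_id x).const_mul 2).sub_const 1
        exact (Real.hasDerivAt_arccos (by linarith) (by linarith)).comp x hin
      exact (((h1.const_mul 2).add h2).add
        (((hasDerivAt_id' x).const_mul (2*π*m)))).differentiableAt.differentiableWithinAt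
    · intro x hx
      rw [interior_Icc] at hx
      have hx0 : 0 < x := lt_of_le_of_lt hl0 hx.1
      have hx1 : x < 1 := lt_of_lt_of_le hx.2 hr1
      have h1 : HasDerivAt Real.arccos (-(1/Real.sqrt (1-x^2))) x :=
        Real.hasDerivAt_arccos (by linarith) (by linarith)
      have h2 : HasDerivAt (fun x : ℝ => Real.arccos (2*x-1))
          (-(1/Real.sqrt (1-(2*x-1)^2)) * 2) x := by
        have hin : HasDerivAt (fun x : ℝ => 2*x-1) 2 x := by
          simpa using ((hasDerivAt_id x).const_mul 2).sub_const 1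
        exact (Real.hasDerivAt_arccos (by linarith) (by linarith)).comp x hin
      have hd : HasDerivAt (fun x : ℝ => 2*Real.arccos x + Real.arccos (2*x-1) + 2*π*m*x)
          (2 * -(1 / √(1 - x ^ 2)) + -(1 / √(1 - (2 * x - 1) ^ 2)) * 2 + 2 * π * m * 1) x :=
        ((h1.const_mul 2).add h2).add ((hasDerivAt_id' x).const_mul (2*π*m))
      rw [hd.deriv]
      have := hq x hx.1 hx.2
      have e1 : 2 * -(1/Real.sqrt (1-x^2)) = -(2/Real.sqrt (1-x^2)) := by ring
      have e2 : -(1/Real.sqrt (1-(2*x-1)^2)) * 2 = -(2/Real.sqrt (1-(2*x-1)^2)) := by ring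
      nlinarith [this]
  exact hanti (Set.mem_Icc.2 ⟨le_refl l, le_trans ha1 ha2⟩) (Set.mem_Icc.2 ⟨ha1, ha2⟩) ha1

private lemma seg0 : ∀ a : ℝ, (0) ≤ a → a ≤ (307/2500) →
    2*Real.arccos a + Real.arccos (2*a-1) + 2*π*(257/320)*a ≤ 2*π := by
  intro a ha1 ha2
  have hπl := Real.pi_gt_d6
  have hπu := Real.pi_lt_d6
  have hψ := key (0) (307/2500) (803229/1000000) (by norm_num) (by norm_num) ?hq a ha1 ha2
  case hq =>
    intro x hx1 hx2
    have hs1pos : 0 < Real.sqrt (1-x^2) := Real.sqrt_pos.2 (by nlinarith [mul_pos (show (0:ℝ) < 1 - x by linarith) (show (0:ℝ) < 1 + x by linarith)])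
    have hs2pos : 0 < Real.sqrt (1-(2*x-1)^2) := Real.sqrt_pos.2 (by nlinarith [mul_pos (show (0:ℝ) < x by linarith) (show (0:ℝ) < 1 - x by linarith)])
    have hs1 : Real.sqrt (1-x^2) ≤ (1000001/1000000) := (Real.sqrt_le_left (by norm_num)).2 (by nlinarith [sq_nonneg (x - (0))])
    have hs2 : Real.sqrt (1-(2*x-1)^2) ≤ (20513/31250) := (Real.sqrt_le_left (by norm_num)).2 (by nlinarith [mul_nonneg (show (0:ℝ) ≤ (307/2500) - x by linarith) (show (0:ℝ) ≤ 1 - (307/2500) - x by linarith)])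
    have d1 : 2/(1000001/1000000) ≤ 2/Real.sqrt (1-x^2) := div_le_div_of_nonneg_left (by norm_num) hs1pos hs1
    have d2 : 2/(20513/31250) ≤ 2/Real.sqrt (1-(2*x-1)^2) := div_le_div_of_nonneg_left (by norm_num) hs2pos hs2
    linarith
  rw [show (2*(0:ℝ)-1) = -1 by norm_num, Real.arccos_zero, Real.arccos_neg_one] at hψ
  have hw : 2*π*(257/320)*a ≤ 2*π*(803229/1000000)*a := by
    have h := mul_nonneg (mul_nonneg (show (0:ℝ) ≤ 2*((803229/1000000) - 257/320) by norm_num) Real.pi_pos.le) (show (0:ℝ) ≤ a by linarith)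
    nlinarith [h]
  linarith

private lemma seg1 : ∀ a : ℝ, (307/2500) ≤ a → a ≤ (2287/5000) →
    2*Real.arccos a + Real.arccos (2*a-1) + 2*π*(257/320)*a ≤ 2*π := by
  intro a ha1 ha2
  have hπl := Real.pi_gt_d6
  have hπu := Real.pi_lt_d6
  have hψ := key (307/2500) (2287/5000) (320103/500000) (by norm_num) (by norm_num) ?hq a ha1 ha2
  case hq =>
    intro x hx1 hx2
    have hs1pos : 0 < Real.sqrt (1-x^2) := Real.sqrt_pos.2 (by nlinarith [mul_pos (show (0:ℝ) < 1 - x by linarith) (show (0:ℝ) < 1 + x by linarith)])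
    have hs2pos : 0 < Real.sqrt (1-(2*x-1)^2) := Real.sqrt_pos.2 (by nlinarith [mul_pos (show (0:ℝ) < x by linarith) (show (0:ℝ) < 1 - x by linarith)])
    have hs1 : Real.sqrt (1-x^2) ≤ (992433/1000000) := (Real.sqrt_le_left (by norm_num)).2 (by nlinarith [sq_nonneg (x - (307/2500))])
    have hs2 : Real.sqrt (1-(2*x-1)^2) ≤ (199273/200000) := (Real.sqrt_le_left (by norm_num)).2 (by nlinarith [mul_nonneg (show (0:ℝ) ≤ (2287/5000) - x by linarith) (show (0:ℝ) ≤ 1 - (2287/5000) - x by linarith)])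
    have d1 : 2/(992433/1000000) ≤ 2/Real.sqrt (1-x^2) := div_le_div_of_nonneg_left (by norm_num) hs1pos hs1
    have d2 : 2/(199273/200000) ≤ 2/Real.sqrt (1-(2*x-1)^2) := div_le_div_of_nonneg_left (by norm_num) hs2pos hs2
    linarith
  have hu1 : Real.arccos (307/2500) ≤ (1447697/1000000) := arccos_le_of_cos_le (by norm_num) (by linarith) (cos_le_num (by norm_num) (by norm_num))
  have hs : (143211/200000) ≤ Real.arccos (1-2*(307/2500)) := le_arccos_of_le_cos (by norm_num) (by linarith) (le_cos_num (by norm_num) (by norm_num))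
  have hu2 : Real.arccos (2*(307/2500)-1) ≤ π - (143211/200000) := by
    rw [show (2*(307/2500)-1 : ℝ) = -(1-2*(307/2500)) by norm_num, Real.arccos_neg]
    linarith
  have hw : 2*π*(257/320 - (320103/500000))*a ≤ 2*π*(257/320 - (320103/500000))*(2287/5000) := by
    have h := mul_nonneg (mul_nonneg (show (0:ℝ) ≤ 2*(257/320 - (320103/500000)) by norm_num) Real.pi_pos.le) (show (0:ℝ) ≤ (2287/5000) - a by linarith)
    nlinarith [h]
  linarith

private lemma seg2 : ∀ a : ℝ, (2287/5000) ≤ a → a ≤ (6173/10000) →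
    2*Real.arccos a + Real.arccos (2*a-1) + 2*π*(257/320)*a ≤ 2*π := by
  intro a ha1 ha2
  have hπl := Real.pi_gt_d6
  have hπu := Real.pi_lt_d6
  have hψ := key (2287/5000) (6173/10000) (21133/31250) (by norm_num) (by norm_num) ?hq a ha1 ha2
  case hq =>
    intro x hx1 hx2
    have hs1pos : 0 < Real.sqrt (1-x^2) := Real.sqrt_pos.2 (by nlinarith [mul_pos (show (0:ℝ) < 1 - x by linarith) (show (0:ℝ) < 1 + x by linarith)])
    have hs2pos : 0 < Real.sqrt (1-(2*x-1)^2) := Real.sqrt_pos.2 (by nlinarith [mul_pos (show (0:ℝ) < x by linarith) (show (0:ℝ) < 1 - x by linarith)])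
    have hs1 : Real.sqrt (1-x^2) ≤ (889263/1000000) := (Real.sqrt_le_left (by norm_num)).2 (by nlinarith [sq_nonneg (x - (2287/5000))])
    have hs2 : Real.sqrt (1-(2*x-1)^2) ≤ (1000001/1000000) := (Real.sqrt_le_left (by norm_num)).2 (by nlinarith [sq_nonneg (2*x-1)])
    have d1 : 2/(889263/1000000) ≤ 2/Real.sqrt (1-x^2) := div_le_div_of_nonneg_left (by norm_num) hs1pos hs1
    have d2 : 2/(1000001/1000000) ≤ 2/Real.sqrt (1-(2*x-1)^2) := div_le_div_of_nonneg_left (by norm_num) hs2pos hs2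
    linarith
  have hu1 : Real.arccos (2287/5000) ≤ (1095729/1000000) := arccos_le_of_cos_le (by norm_num) (by linarith) (cos_le_num (by norm_num) (by norm_num))
  have hs : (1485491/1000000) ≤ Real.arccos (1-2*(2287/5000)) := le_arccos_of_le_cos (by norm_num) (by linarith) (le_cos_num (by norm_num) (by norm_num))
  have hu2 : Real.arccos (2*(2287/5000)-1) ≤ π - (1485491/1000000) := by
    rw [show (2*(2287/5000)-1 : ℝ) = -(1-2*(2287/5000)) by norm_num, Real.arccos_neg]
    linarith
  have hw : 2*π*(257/320 - (21133/31250))*a ≤ 2*π*(257/320 - (21133/31250))*(6173/10000) := by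
    have h := mul_nonneg (mul_nonneg (show (0:ℝ) ≤ 2*(257/320 - (21133/31250)) by norm_num) Real.pi_pos.le) (show (0:ℝ) ≤ (6173/10000) - a by linarith)
    nlinarith [h]
  linarith

private lemma seg3 : ∀ a : ℝ, (6173/10000) ≤ a → a ≤ (1673/2500) →
    2*Real.arccos a + Real.arccos (2*a-1) + 2*π*(257/320)*a ≤ 2*π := by
  intro a ha1 ha2
  have hπl := Real.pi_gt_d6
  have hπu := Real.pi_lt_d6
  have hψ := key (6173/10000) (1673/2500) (366023/500000) (by norm_num) (by norm_num) ?hq a ha1 ha2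
  case hq =>
    intro x hx1 hx2
    have hs1pos : 0 < Real.sqrt (1-x^2) := Real.sqrt_pos.2 (by nlinarith [mul_pos (show (0:ℝ) < 1 - x by linarith) (show (0:ℝ) < 1 + x by linarith)])
    have hs2pos : 0 < Real.sqrt (1-(2*x-1)^2) := Real.sqrt_pos.2 (by nlinarith [mul_pos (show (0:ℝ) < x by linarith) (show (0:ℝ) < 1 - x by linarith)])
    have hs1 : Real.sqrt (1-x^2) ≤ (786729/1000000) := (Real.sqrt_le_left (by norm_num)).2 (by nlinarith [sq_nonneg (x - (6173/10000))])
    have hs2 : Real.sqrt (1-(2*x-1)^2) ≤ (972093/1000000) := (Real.sqrt_le_left (by norm_num)).2 (by nlinarith [mul_nonneg (show (0:ℝ) ≤ x - (6173/10000) by linarith) (show (0:ℝ) ≤ x + (6173/10000) - 1 by linarith)])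
    have d1 : 2/(786729/1000000) ≤ 2/Real.sqrt (1-x^2) := div_le_div_of_nonneg_left (by norm_num) hs1pos hs1
    have d2 : 2/(972093/1000000) ≤ 2/Real.sqrt (1-(2*x-1)^2) := div_le_div_of_nonneg_left (by norm_num) hs2pos hs2
    linarith
  have hu1 : Real.arccos (6173/10000) ≤ (226373/250000) := arccos_le_of_cos_le (by norm_num) (by linarith) (cos_le_num (by norm_num) (by norm_num))
  have hu2 : Real.arccos (2*(6173/10000)-1) ≤ (266799/200000) := arccos_le_of_cos_le (by norm_num) (by linarith) (cos_le_num (by norm_num) (by norm_num))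
  have hw : 2*π*(257/320 - (366023/500000))*a ≤ 2*π*(257/320 - (366023/500000))*(1673/2500) := by
    have h := mul_nonneg (mul_nonneg (show (0:ℝ) ≤ 2*(257/320 - (366023/500000)) by norm_num) Real.pi_pos.le) (show (0:ℝ) ≤ (1673/2500) - a by linarith)
    nlinarith [h]
  linarith

private lemma seg4 : ∀ a : ℝ, (1673/2500) ≤ a → a ≤ (277/400) →
    2*Real.arccos a + Real.arccos (2*a-1) + 2*π*(257/320)*a ≤ 2*π := by
  intro a ha1 ha2
  have hπl := Real.pi_gt_d6
  have hπu := Real.pi_lt_d6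
  have hψ := key (1673/2500) (277/400) (191657/250000) (by norm_num) (by norm_num) ?hq a ha1 ha2
  case hq =>
    intro x hx1 hx2
    have hs1pos : 0 < Real.sqrt (1-x^2) := Real.sqrt_pos.2 (by nlinarith [mul_pos (show (0:ℝ) < 1 - x by linarith) (show (0:ℝ) < 1 + x by linarith)])
    have hs2pos : 0 < Real.sqrt (1-(2*x-1)^2) := Real.sqrt_pos.2 (by nlinarith [mul_pos (show (0:ℝ) < x by linarith) (show (0:ℝ) < 1 - x by linarith)])
    have hs1 : Real.sqrt (1-x^2) ≤ (185771/250000) := (Real.sqrt_le_left (by norm_num)).2 (by nlinarith [sq_nonneg (x - (1673/2500))])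
    have hs2 : Real.sqrt (1-(2*x-1)^2) ≤ (235251/250000) := (Real.sqrt_le_left (by norm_num)).2 (by nlinarith [mul_nonneg (show (0:ℝ) ≤ x - (1673/2500) by linarith) (show (0:ℝ) ≤ x + (1673/2500) - 1 by linarith)])
    have d1 : 2/(185771/250000) ≤ 2/Real.sqrt (1-x^2) := div_le_div_of_nonneg_left (by norm_num) hs1pos hs1
    have d2 : 2/(235251/250000) ≤ 2/Real.sqrt (1-(2*x-1)^2) := div_le_div_of_nonneg_left (by norm_num) hs2pos hs2
    linarith
  have hu1 : Real.arccos (1673/2500) ≤ (418833/500000) := arccos_le_of_cos_le (by norm_num) (by linarith) (cos_le_num (by norm_num) (by norm_num))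
  have hu2 : Real.arccos (2*(1673/2500)-1) ≤ (1225583/1000000) := arccos_le_of_cos_le (by norm_num) (by linarith) (cos_le_num (by norm_num) (by norm_num))
  have hw : 2*π*(257/320 - (191657/250000))*a ≤ 2*π*(257/320 - (191657/250000))*(277/400) := by
    have h := mul_nonneg (mul_nonneg (show (0:ℝ) ≤ 2*(257/320 - (191657/250000)) by norm_num) Real.pi_pos.le) (show (0:ℝ) ≤ (277/400) - a by linarith)
    nlinarith [h]
  linarith

private lemma seg5 : ∀ a : ℝ, (277/400) ≤ a → a ≤ (7057/10000) →
    2*Real.arccos a + Real.arccos (2*a-1) + 2*π*(257/320)*a ≤ 2*π := by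
  intro a ha1 ha2
  have hπl := Real.pi_gt_d6
  have hπu := Real.pi_lt_d6
  have hψ := key (277/400) (7057/10000) (786121/1000000) (by norm_num) (by norm_num) ?hq a ha1 ha2
  case hq =>
    intro x hx1 hx2
    have hs1pos : 0 < Real.sqrt (1-x^2) := Real.sqrt_pos.2 (by nlinarith [mul_pos (show (0:ℝ) < 1 - x by linarith) (show (0:ℝ) < 1 + x by linarith)])
    have hs2pos : 0 < Real.sqrt (1-(2*x-1)^2) := Real.sqrt_pos.2 (by nlinarith [mul_pos (show (0:ℝ) < x by linarith) (show (0:ℝ) < 1 - x by linarith)])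
    have hs1 : Real.sqrt (1-x^2) ≤ (721419/1000000) := (Real.sqrt_le_left (by norm_num)).2 (by nlinarith [sq_nonneg (x - (277/400))])
    have hs2 : Real.sqrt (1-(2*x-1)^2) ≤ (461459/500000) := (Real.sqrt_le_left (by norm_num)).2 (by nlinarith [mul_nonneg (show (0:ℝ) ≤ x - (277/400) by linarith) (show (0:ℝ) ≤ x + (277/400) - 1 by linarith)])
    have d1 : 2/(721419/1000000) ≤ 2/Real.sqrt (1-x^2) := div_le_div_of_nonneg_left (by norm_num) hs1pos hs1
    have d2 : 2/(461459/500000) ≤ 2/Real.sqrt (1-(2*x-1)^2) := div_le_div_of_nonneg_left (by norm_num) hs2pos hs2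
    linarith
  have hu1 : Real.arccos (277/400) ≤ (805849/1000000) := arccos_le_of_cos_le (by norm_num) (by linarith) (cos_le_num (by norm_num) (by norm_num))
  have hu2 : Real.arccos (2*(277/400)-1) ≤ (117559/100000) := arccos_le_of_cos_le (by norm_num) (by linarith) (cos_le_num (by norm_num) (by norm_num))
  have hw : 2*π*(257/320 - (786121/1000000))*a ≤ 2*π*(257/320 - (786121/1000000))*(7057/10000) := by
    have h := mul_nonneg (mul_nonneg (show (0:ℝ) ≤ 2*(257/320 - (786121/1000000)) by norm_num) Real.pi_pos.le) (show (0:ℝ) ≤ (7057/10000) - a by linarith)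
    nlinarith [h]
  linarith

private lemma seg6 : ∀ a : ℝ, (7057/10000) ≤ a → a ≤ (452/625) →
    2*Real.arccos a + Real.arccos (2*a-1) + 2*π*(257/320)*a ≤ 2*π := by
  intro a ha1 ha2
  have hπl := Real.pi_gt_d6
  have hπu := Real.pi_lt_d6
  have hψ := key (7057/10000) (452/625) (24953/31250) (by norm_num) (by norm_num) ?hq a ha1 ha2
  case hq =>
    intro x hx1 hx2
    have hs1pos : 0 < Real.sqrt (1-x^2) := Real.sqrt_pos.2 (by nlinarith [mul_pos (show (0:ℝ) < 1 - x by linarith) (show (0:ℝ) < 1 + x by linarith)])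
    have hs2pos : 0 < Real.sqrt (1-(2*x-1)^2) := Real.sqrt_pos.2 (by nlinarith [mul_pos (show (0:ℝ) < x by linarith) (show (0:ℝ) < 1 - x by linarith)])
    have hs1 : Real.sqrt (1-x^2) ≤ (22141/31250) := (Real.sqrt_le_left (by norm_num)).2 (by nlinarith [sq_nonneg (x - (7057/10000))])
    have hs2 : Real.sqrt (1-(2*x-1)^2) ≤ (28483/31250) := (Real.sqrt_le_left (by norm_num)).2 (by nlinarith [mul_nonneg (show (0:ℝ) ≤ x - (7057/10000) by linarith) (show (0:ℝ) ≤ x + (7057/10000) - 1 by linarith)])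
    have d1 : 2/(22141/31250) ≤ 2/Real.sqrt (1-x^2) := div_le_div_of_nonneg_left (by norm_num) hs1pos hs1
    have d2 : 2/(28483/31250) ≤ 2/Real.sqrt (1-(2*x-1)^2) := div_le_div_of_nonneg_left (by norm_num) hs2pos hs2
    linarith
  have hu1 : Real.arccos (7057/10000) ≤ (787387/1000000) := arccos_le_of_cos_le (by norm_num) (by linarith) (cos_le_num (by norm_num) (by norm_num))
  have hu2 : Real.arccos (2*(7057/10000)-1) ≤ (143351/125000) := arccos_le_of_cos_le (by norm_num) (by linarith) (cos_le_num (by norm_num) (by norm_num))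
  have hw : 2*π*(257/320 - (24953/31250))*a ≤ 2*π*(257/320 - (24953/31250))*(452/625) := by
    have h := mul_nonneg (mul_nonneg (show (0:ℝ) ≤ 2*(257/320 - (24953/31250)) by norm_num) Real.pi_pos.le) (show (0:ℝ) ≤ (452/625) - a by linarith)
    nlinarith [h]
  linarith

private lemma seg7 : ∀ a : ℝ, (452/625) ≤ a → a ≤ (1) →
    2*Real.arccos a + Real.arccos (2*a-1) + 2*π*(257/320)*a ≤ 2*π := by
  intro a ha1 ha2
  have hπl := Real.pi_gt_d6
  have hπu := Real.pi_lt_d6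
  have hψ := key (452/625) (1) (816609/1000000) (by norm_num) (by norm_num) ?hq a ha1 ha2
  case hq =>
    intro x hx1 hx2
    have hs1pos : 0 < Real.sqrt (1-x^2) := Real.sqrt_pos.2 (by nlinarith [mul_pos (show (0:ℝ) < 1 - x by linarith) (show (0:ℝ) < 1 + x by linarith)])
    have hs2pos : 0 < Real.sqrt (1-(2*x-1)^2) := Real.sqrt_pos.2 (by nlinarith [mul_pos (show (0:ℝ) < x by linarith) (show (0:ℝ) < 1 - x by linarith)])
    have hs1 : Real.sqrt (1-x^2) ≤ (8633/12500) := (Real.sqrt_le_left (by norm_num)).2 (by nlinarith [sq_nonneg (x - (452/625))])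
    have hs2 : Real.sqrt (1-(2*x-1)^2) ≤ (178967/200000) := (Real.sqrt_le_left (by norm_num)).2 (by nlinarith [mul_nonneg (show (0:ℝ) ≤ x - (452/625) by linarith) (show (0:ℝ) ≤ x + (452/625) - 1 by linarith)])
    have d1 : 2/(8633/12500) ≤ 2/Real.sqrt (1-x^2) := div_le_div_of_nonneg_left (by norm_num) hs1pos hs1
    have d2 : 2/(178967/200000) ≤ 2/Real.sqrt (1-(2*x-1)^2) := div_le_div_of_nonneg_left (by norm_num) hs2pos hs2
    linarith
  have hu1 : Real.arccos (452/625) ≤ (762373/1000000) := arccos_le_of_cos_le (by norm_num) (by linarith) (cos_le_num (by norm_num) (by norm_num))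
  have hu2 : Real.arccos (2*(452/625)-1) ≤ (55403/50000) := arccos_le_of_cos_le (by norm_num) (by linarith) (cos_le_num (by norm_num) (by norm_num))
  have hw : 2*π*(257/320 - (816609/1000000))*a ≤ 2*π*(257/320 - (816609/1000000))*(452/625) := by
    have h := mul_nonneg (mul_nonneg (show (0:ℝ) ≤ 2*((816609/1000000) - 257/320) by norm_num) Real.pi_pos.le) (show (0:ℝ) ≤ a - (452/625) by linarith)
    nlinarith [h]
  linarith

private lemma lower_core : ∀ a : ℝ, 0 < a → a ≤ 1 →
    2*Real.arccos a + Real.arccos (2*a-1) + 2*π*(257/320)*a ≤ 2*π := by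
  intro a h0 h1
  rcases le_or_gt a (307/2500) with hc0 | hc0
  · exact seg0 a h0.le hc0
  rcases le_or_gt a (2287/5000) with hc1 | hc1
  · exact seg1 a hc0.le hc1
  rcases le_or_gt a (6173/10000) with hc2 | hc2
  · exact seg2 a hc1.le hc2
  rcases le_or_gt a (1673/2500) with hc3 | hc3
  · exact seg3 a hc2.le hc3
  rcases le_or_gt a (277/400) with hc4 | hc4
  · exact seg4 a hc3.le hc4
  rcases le_or_gt a (7057/10000) with hc5 | hc5
  · exact seg5 a hc4.le hc5
  rcases le_or_gt a (452/625) with hc6 | hc6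
  · exact seg6 a hc5.le hc6
  exact seg7 a hc6.le h1

private lemma lower (a : ℝ) (h0 : 0 < a) (h1 : a ≤ 1) : (257/320 : ℝ) ≤ h₁ a := by
  have hA := lower_core a h0 h1
  have h2π : (0:ℝ) < 2*π := by positivity
  unfold h₁
  rw [le_div_iff₀ h0]
  have hd : (2*Real.arccos a + Real.arccos (2*a-1))/(2*π) ≤ 1 - 257/320*a := by
    rw [div_le_iff₀ h2π]
    nlinarith [hA]
  linarith

private lemma upper : h₁ (7105/10000) ≤ 803325/1000000 := by
  have hπu := Real.pi_lt_d6
  have hπl := Real.pi_gt_d6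
  have hs1 : ((780587/1000000) : ℝ) ≤ Real.arccos (7105/10000) := le_arccos_of_le_cos (by norm_num) (by linarith) (le_cos_num (by norm_num) (by norm_num))
  have hs2 : ((142031/125000) : ℝ) ≤ Real.arccos (2*(7105/10000)-1) := by
    have h := le_arccos_of_le_cos (s := (142031/125000)) (x := (421/1000 : ℝ)) (by norm_num) (by linarith) (le_cos_num (by norm_num) (by norm_num))
    rw [show (2*(7105/10000 : ℝ)-1) = 421/1000 by norm_num]
    exact h
  have h2π : (0:ℝ) < 2*π := by positivity
  unfold h₁
  rw [div_le_iff₀ (show (0:ℝ) < 7105/10000 by norm_num)]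
  have hA : (1 - 803325/1000000*(7105/10000)) ≤ (2*Real.arccos (7105/10000) + Real.arccos (2*(7105/10000)-1))/(2*π) := by
    rw [le_div_iff₀ h2π]
    nlinarith [hs1, hs2]
  linarith

/-- the infimum of `h₁` over `(0,1]` lies in `[0.803125, 0.803325]`. -/
theorem stmt7 : sInf (h₁ '' Set.Ioc (0 : ℝ) 1) ∈ Set.Icc (0.803125 : ℝ) 0.803325 := by
  have hne : (h₁ '' Set.Ioc (0:ℝ) 1).Nonempty := ⟨h₁ 1, 1, by norm_num, rfl⟩
  have hbdd : BddBelow (h₁ '' Set.Ioc (0:ℝ) 1) := by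
    refine ⟨257/320, ?_⟩
    rintro y ⟨a, ⟨ha0, ha1⟩, rfl⟩
    exact lower a ha0 ha1
  constructor
  · have h := le_csInf hne (fun y hy => by
      obtain ⟨a, ⟨ha0, ha1⟩, rfl⟩ := hy
      exact lower a ha0 ha1)
    calc (0.803125 : ℝ) = 257/320 := by norm_num
      _ ≤ sInf (h₁ '' Set.Ioc (0:ℝ) 1) := h
  · calc sInf (h₁ '' Set.Ioc (0:ℝ) 1) ≤ h₁ (7105/10000) :=
        csInf_le hbdd ⟨7105/10000, by norm_num, rfl⟩
      _ ≤ 803325/1000000 := upper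
      _ ≤ 0.803325 := by norm_num
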